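/- Let g ∈ H', f^0 ∈ H, and define the iterates f^{n+1} = T(f^n) where T(f) = S_{W,P}(f + K*(g − Kf)) (equivalently, f^{n+1} is the unique minimizer of f ↦ Φ^sur(f; f^n)). Then both sequences (Φ(f^n))_{n∈ℕ} and (Φ^sur(f^{n+1}; f^n))_{n∈ℕ} are non-increasing; in particular Φ(f^{n+1}) ≤ Φ^sur(f^{n+1}; f^n) ≤ Φ(f^n) for every n. -/

import Mathlib

open scoped RealInnerProductSpace ENNReal

private lemma aux_quad {H H' : Type*} [NormedAddCommGroup H] [InnerProductSpace ℝ H]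
    [CompleteSpace H] [NormedAddCommGroup H'] [InnerProductSpace ℝ H'] [CompleteSpace H']
    (K : H →L[ℝ] H') (g : H') (a f : H) :
    ‖K f - g‖ ^ 2 + (‖f - a‖ ^ 2 - ‖K (f - a)‖ ^ 2)
      = ‖f‖ ^ 2 - 2 * ⟪f, a + (ContinuousLinearMap.adjoint K) (g - K a)⟫
        + (‖g‖ ^ 2 + ‖a‖ ^ 2 - ‖K a‖ ^ 2) := by
  have h1 : ⟪f, (ContinuousLinearMap.adjoint K) (g - K a)⟫ = ⟪K f, g - K a⟫ :=
    ContinuousLinearMap.adjoint_inner_right K f (g - K a)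
  have h2 : K (f - a) = K f - K a := map_sub K f a
  rw [norm_sub_sq_real (K f) g, norm_sub_sq_real f a, h2, norm_sub_sq_real (K f) (K a),
    inner_add_right, h1, inner_sub_right]
  ring

theorem stmt_10
    {H H' : Type*} [NormedAddCommGroup H] [InnerProductSpace ℝ H] [CompleteSpace H]
    [NormedAddCommGroup H'] [InnerProductSpace ℝ H'] [CompleteSpace H']
    {Γ : Type*} [Countable Γ]
    (e : HilbertBasis Γ ℝ H)
    (K : H →L[ℝ] H') (hK : ‖K‖ < 1)
    (w : Γ → ℝ) (c : ℝ) (hc : 0 < c) (hw : ∀ γ, c ≤ w γ)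
    (p : Γ → ℝ) (hp : ∀ γ, 1 ≤ p γ ∧ p γ ≤ 2)
    (g : H')
    (Φ : H → ℝ≥0∞)
    (hΦ : ∀ f, Φ f = ENNReal.ofReal (‖K f - g‖ ^ 2) +
      ∑' γ, ENNReal.ofReal (w γ * |⟪f, e γ⟫| ^ (p γ)))
    (Φsur : H → H → ℝ≥0∞)
    (hΦsur : ∀ f a', Φsur f a' = Φ f + ENNReal.ofReal (‖f - a'‖ ^ 2 - ‖K (f - a')‖ ^ 2))
    (S : Γ → ℝ → ℝ)
    (hS : ∀ (γ : Γ) (b x : ℝ),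
      (S γ b) ^ 2 - 2 * b * S γ b + w γ * |S γ b| ^ (p γ) ≤
        x ^ 2 - 2 * b * x + w γ * |x| ^ (p γ))
    (T : H → H)
    (hT : ∀ (f : H) (γ : Γ),
      ⟪T f, e γ⟫ = S γ ⟪f + (ContinuousLinearMap.adjoint K) (g - K f), e γ⟫)
    (fseq : ℕ → H)
    (hstep : ∀ n, fseq (n + 1) = T (fseq n)) :
    Antitone (fun n => Φ (fseq n)) ∧
    Antitone (fun n => Φsur (fseq (n + 1)) (fseq n)) ∧
    ∀ n, Φ (fseq (n + 1)) ≤ Φsur (fseq (n + 1)) (fseq n) ∧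
      Φsur (fseq (n + 1)) (fseq n) ≤ Φ (fseq n) := by
  have hwnn : ∀ γ (x : ℝ), 0 ≤ w γ * |x| ^ (p γ) := fun γ x =>
    mul_nonneg (hc.le.trans (hw γ)) (Real.rpow_nonneg (abs_nonneg _) _)
  -- ‖K x‖² ≤ ‖x‖²
  have hKx : ∀ x : H, ‖K x‖ ^ 2 ≤ ‖x‖ ^ 2 := by
    intro x
    have h1 : ‖K x‖ ≤ ‖K‖ * ‖x‖ := K.le_opNorm x
    have h2 : ‖K‖ * ‖x‖ ≤ 1 * ‖x‖ := mul_le_mul_of_nonneg_right hK.le (norm_nonneg x)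
    have h3 : ‖K x‖ ≤ ‖x‖ := by linarith
    exact pow_le_pow_left₀ (norm_nonneg _) h3 2
  -- Φ f ≤ Φsur f a, always
  have hle1 : ∀ f a, Φ f ≤ Φsur f a := by
    intro f a; rw [hΦsur]; exact le_self_add
  -- Φsur a a = Φ a
  have heq : ∀ a, Φsur a a = Φ a := by
    intro a; rw [hΦsur]; simp
  -- key minimization property
  have key : ∀ a f : H, Φsur (T a) a ≤ Φsur f a := by
    intro a f
    set b : H := a + (ContinuousLinearMap.adjoint K) (g - K a) with hbdef
    have hb : ∀ γ, ⟪T a, e γ⟫ = S γ ⟪b, e γ⟫ := fun γ => hT a γ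
    have hbsum : Summable (fun γ => ⟪b, e γ⟫ ^ 2) := by
      have := (e.hasSum_inner_mul_inner b b).summable
      simpa [real_inner_comm, sq] using this
    -- representation lemma
    have rep : ∀ h : H, Summable (fun γ => w γ * |⟪h, e γ⟫| ^ (p γ)) →
        Φsur h a = ENNReal.ofReal ((‖g‖ ^ 2 + ‖a‖ ^ 2 - ‖K a‖ ^ 2) +
          ∑' γ, (⟪h, e γ⟫ ^ 2 - 2 * ⟪b, e γ⟫ * ⟪h, e γ⟫ + w γ * |⟪h, e γ⟫| ^ (p γ))) := by
      intro h hsum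
      have hh2 : HasSum (fun γ => ⟪h, e γ⟫ ^ 2) (‖h‖ ^ 2) := by
        have := e.hasSum_inner_mul_inner h h
        rw [real_inner_self_eq_norm_sq] at this
        simpa [real_inner_comm, sq] using this
      have hhb : HasSum (fun γ => ⟪h, e γ⟫ * ⟪b, e γ⟫) ⟪h, b⟫ := by
        have := e.hasSum_inner_mul_inner h b
        simpa [real_inner_comm] using this
      have hcomb : HasSum
          (fun γ => ⟪h, e γ⟫ ^ 2 - 2 * ⟪b, e γ⟫ * ⟪h, e γ⟫ + w γ * |⟪h, e γ⟫| ^ (p γ))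
          (‖h‖ ^ 2 - 2 * ⟪h, b⟫ + ∑' γ, w γ * |⟪h, e γ⟫| ^ (p γ)) := by
        have := (hh2.sub (hhb.mul_left 2)).add hsum.hasSum
        have hf : (fun γ => ⟪h, e γ⟫ ^ 2 - 2 * ⟪b, e γ⟫ * ⟪h, e γ⟫ + w γ * |⟪h, e γ⟫| ^ (p γ))
            = (fun γ => ⟪h, e γ⟫ ^ 2 - 2 * (⟪h, e γ⟫ * ⟪b, e γ⟫) + w γ * |⟪h, e γ⟫| ^ (p γ)) := by
          funext γ
          ring
        rw [hf]
        exact this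
      have htsum : ∑' γ, (⟪h, e γ⟫ ^ 2 - 2 * ⟪b, e γ⟫ * ⟪h, e γ⟫ + w γ * |⟪h, e γ⟫| ^ (p γ))
          = ‖h‖ ^ 2 - 2 * ⟪h, b⟫ + ∑' γ, w γ * |⟪h, e γ⟫| ^ (p γ) := hcomb.tsum_eq
      have hD : 0 ≤ ‖h - a‖ ^ 2 - ‖K (h - a)‖ ^ 2 := sub_nonneg.mpr (hKx (h - a))
      have htnn : 0 ≤ ∑' γ, w γ * |⟪h, e γ⟫| ^ (p γ) :=
        tsum_nonneg (fun γ => hwnn γ _)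
      rw [hΦsur, hΦ]
      rw [← ENNReal.ofReal_tsum_of_nonneg (fun γ => hwnn γ _) hsum]
      rw [← ENNReal.ofReal_add (sq_nonneg _) htnn, ← ENNReal.ofReal_add (by positivity) hD]
      congr 1
      rw [htsum]
      have := aux_quad K g a h
      rw [← hbdef] at this
      linarith [this]
    -- summability for T a
    have hSb0 : ∀ γ, S γ ⟪b, e γ⟫ ^ 2 - 2 * ⟪b, e γ⟫ * S γ ⟪b, e γ⟫
        + w γ * |S γ ⟪b, e γ⟫| ^ (p γ) ≤ 0 := by
      intro γ
      have h0 := hS γ ⟪b, e γ⟫ 0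
      have hp0 : p γ ≠ 0 := by have := (hp γ).1; linarith
      simpa [Real.zero_rpow hp0] using h0
    have habs : ∀ γ, |S γ ⟪b, e γ⟫| ≤ 2 * |⟪b, e γ⟫| := by
      intro γ
      have h0 := hSb0 γ
      have hw' := hwnn γ (S γ ⟪b, e γ⟫)
      have h1 : ⟪b, e γ⟫ * S γ ⟪b, e γ⟫ ≤ |⟪b, e γ⟫| * |S γ ⟪b, e γ⟫| := by
        rw [← abs_mul]; exact le_abs_self _
      have h2 : |S γ ⟪b, e γ⟫| ^ 2 ≤ 2 * (|⟪b, e γ⟫| * |S γ ⟪b, e γ⟫|) := by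
        rw [sq_abs]; nlinarith
      rcases eq_or_lt_of_le (abs_nonneg (S γ ⟪b, e γ⟫)) with h3 | h3
      · rw [← h3]; positivity
      · nlinarith
    have hbound : ∀ γ, w γ * |S γ ⟪b, e γ⟫| ^ (p γ) ≤ 4 * ⟪b, e γ⟫ ^ 2 := by
      intro γ
      have h0 := hSb0 γ
      have h1 : ⟪b, e γ⟫ * S γ ⟪b, e γ⟫ ≤ |⟪b, e γ⟫| * |S γ ⟪b, e γ⟫| := by
        rw [← abs_mul]; exact le_abs_self _
      have h2 := habs γ
      have h3 := sq_abs ⟪b, e γ⟫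
      nlinarith [sq_nonneg (S γ ⟪b, e γ⟫), abs_nonneg ⟪b, e γ⟫, abs_nonneg (S γ ⟪b, e γ⟫)]
    have hsumTa : Summable (fun γ => w γ * |⟪T a, e γ⟫| ^ (p γ)) := by
      apply Summable.of_nonneg_of_le (fun γ => hwnn γ _) (fun γ => ?_) (hbsum.mul_left 4)
      rw [hb γ]; exact hbound γ
    -- main case split
    rcases eq_or_ne (Φsur f a) ∞ with hinf | hfin
    · rw [hinf]; exact le_top
    · have hΦf : (∑' γ, ENNReal.ofReal (w γ * |⟪f, e γ⟫| ^ (p γ))) ≠ ∞ := by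
        intro hcon
        rw [hΦsur, hΦ, hcon] at hfin
        simp at hfin
      have hsumf : Summable (fun γ => w γ * |⟪f, e γ⟫| ^ (p γ)) := by
        have := ENNReal.summable_toReal hΦf
        refine this.congr (fun γ => ?_)
        rw [ENNReal.toReal_ofReal (hwnn γ _)]
      rw [rep (T a) hsumTa, rep f hsumf]
      apply ENNReal.ofReal_le_ofReal
      apply add_le_add le_rfl
      -- summability of both combined series
      have hsummTa : Summable (fun γ => ⟪T a, e γ⟫ ^ 2 - 2 * ⟪b, e γ⟫ * ⟪T a, e γ⟫
          + w γ * |⟪T a, e γ⟫| ^ (p γ)) := by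
        have h1 : Summable (fun γ => ⟪T a, e γ⟫ ^ 2) := by
          have := (e.hasSum_inner_mul_inner (T a) (T a)).summable
          simpa [real_inner_comm, sq] using this
        have h2 : Summable (fun γ => ⟪b, e γ⟫ * ⟪T a, e γ⟫) := by
          have := (e.hasSum_inner_mul_inner b (T a)).summable
          simpa [real_inner_comm] using this
        exact (h1.sub ((h2.mul_left 2).congr (fun γ => by ring))).add hsumTa
      have hsummf : Summable (fun γ => ⟪f, e γ⟫ ^ 2 - 2 * ⟪b, e γ⟫ * ⟪f, e γ⟫
          + w γ * |⟪f, e γ⟫| ^ (p γ)) := by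
        have h1 : Summable (fun γ => ⟪f, e γ⟫ ^ 2) := by
          have := (e.hasSum_inner_mul_inner f f).summable
          simpa [real_inner_comm, sq] using this
        have h2 : Summable (fun γ => ⟪b, e γ⟫ * ⟪f, e γ⟫) := by
          have := (e.hasSum_inner_mul_inner b f).summable
          simpa [real_inner_comm] using this
        exact (h1.sub ((h2.mul_left 2).congr (fun γ => by ring))).add hsumf
      refine Summable.tsum_le_tsum (fun γ => ?_) hsummTa hsummf
      rw [hb γ]
      exact hS γ ⟪b, e γ⟫ ⟪f, e γ⟫
  -- assemble
  have main : ∀ n, Φ (fseq (n + 1)) ≤ Φsur (fseq (n + 1)) (fseq n) ∧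
      Φsur (fseq (n + 1)) (fseq n) ≤ Φ (fseq n) := by
    intro n
    constructor
    · exact hle1 _ _
    · calc Φsur (fseq (n + 1)) (fseq n) = Φsur (T (fseq n)) (fseq n) := by rw [hstep n]
        _ ≤ Φsur (fseq n) (fseq n) := key _ _
        _ = Φ (fseq n) := heq _
  refine ⟨antitone_nat_of_succ_le (fun n => ?_), antitone_nat_of_succ_le (fun n => ?_), main⟩
  · exact le_trans (main n).1 (main n).2
  · calc Φsur (fseq (n + 1 + 1)) (fseq (n + 1))
        = Φsur (T (fseq (n + 1))) (fseq (n + 1)) := by rw [hstep (n + 1)]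
      _ ≤ Φsur (fseq (n + 1)) (fseq (n + 1)) := key _ _
      _ = Φ (fseq (n + 1)) := heq _
      _ ≤ Φsur (fseq (n + 1)) (fseq n) := (main n).1
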